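/- Let Z be a linear subspace of ℝⁿ, let K ⊆ {1,…,n} with |K| = k, and let C > 1. Then the following are equivalent: (a) for every w ∈ Z, C·‖w_K‖₁ ≤ ‖w_K̄‖₁; (b) for every x ∈ ℝⁿ supported on K (i.e. with x_K̄ = 0) and every w ∈ Z, ‖x_K + w_K‖₁ + (1/C)·‖w_K̄‖₁ ≥ ‖x_K‖₁. -/
import Mathlib


/-- The ℓ1 norm of a vector in ℝⁿ. -/
noncomputable def l1 {n : ℕ} (x : Fin n → ℝ) : ℝ := ∑ i, |x i|

/-- The restriction of a vector to the coordinates in `K` (zero outside `K`). -/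
def restr {n : ℕ} (K : Finset (Fin n)) (x : Fin n → ℝ) : Fin n → ℝ :=
  fun i => if i ∈ K then x i else 0

lemma l1_add_le {n : ℕ} (x y : Fin n → ℝ) : l1 (x + y) ≤ l1 x + l1 y := by
  unfold l1
  rw [← Finset.sum_add_distrib]
  exact Finset.sum_le_sum fun i _ => abs_add_le _ _

lemma l1_neg {n : ℕ} (x : Fin n → ℝ) : l1 (-x) = l1 x := by
  unfold l1; simp

lemma restr_restr {n : ℕ} (K : Finset (Fin n)) (x : Fin n → ℝ) :
    restr K (restr K x) = restr K x := by
  funext i; unfold restr; by_cases h : i ∈ K <;> simp [h]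

lemma restr_compl_restr {n : ℕ} (K : Finset (Fin n)) (x : Fin n → ℝ) :
    restr Kᶜ (restr K x) = 0 := by
  funext i; unfold restr; by_cases h : i ∈ K <;> simp [h]

theorem stmt_3 {n : ℕ} (Z : Submodule ℝ (Fin n → ℝ))
    (K : Finset (Fin n)) (k : ℕ) (hK : K.card = k) (C : ℝ) (hC : 1 < C) :
    (∀ w ∈ Z, C * l1 (restr K w) ≤ l1 (restr Kᶜ w)) ↔
    (∀ x : Fin n → ℝ, restr Kᶜ x = 0 → ∀ w ∈ Z,
      l1 (restr K x + restr K w) + (1 / C) * l1 (restr Kᶜ w) ≥ l1 (restr K x)) := by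
  have hC0 : (0:ℝ) < C := lt_trans one_pos hC
  constructor
  · intro ha x _ w hw
    have h1 : l1 (restr K x) ≤ l1 (restr K x + restr K w) + l1 (restr K w) := by
      have := l1_add_le (restr K x + restr K w) (-(restr K w))
      simpa [l1_neg] using this
    have h2 : l1 (restr K w) ≤ (1 / C) * l1 (restr Kᶜ w) := by
      have := ha w hw
      rw [div_mul_eq_mul_div, le_div_iff₀ hC0, mul_comm]
      linarith
    linarith
  · intro hb w hw
    have hx := hb (restr K (-w)) (restr_compl_restr K (-w)) w hw
    rw [restr_restr] at hx
    have hneg : restr K (-w) = -(restr K w) := by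
      funext i; unfold restr; by_cases h : i ∈ K <;> simp [h]
    rw [hneg, neg_add_cancel, l1_neg] at hx
    have h0 : l1 (0 : Fin n → ℝ) = 0 := by unfold l1; simp
    rw [h0, zero_add] at hx
    rw [ge_iff_le, div_mul_eq_mul_div, le_div_iff₀ hC0, mul_comm] at hx
    linarith
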